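/- Fix d ≥ 3 and let Y_n be the branch of height n of the d-regular tree with root r, origin leaf o, and collapsed boundary vertex b. If all rotors in Y_n initially point in direction d − 1, then each of the first n − 1 chips started at r reaches o before reaching b. After these n − 1 chips have stopped at o, all rotors point in direction d. -/
import Mathlib


/-!
The finite regular tree with chips stopped at the leaves.

Fix `d ≥ 3` and a height `n ≥ 1`.  The tree `T̂ₙ` is the finite rooted tree in
which every non-leaf vertex has `d - 1` children and every leaf is at distance
`n - 1` from the root, together with one extra leaf `o` attached to the root.
We encode its tree vertices as lists over `Fin (d - 1)` of length `≤ n - 1`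
(the root is `[]`, children are obtained by appending a letter), and a chip
position is `Option (List (Fin (d - 1)))`, where `none` is the extra leaf `o`.

Every non-leaf (internal) vertex carries a rotor with `d` directions indexed
by `ZMod d`; the value `v` with `v < d - 1` points to the child obtained by
appending `v`, and the value `d - 1` points to the parent (for the root, to
`o`).  A rotor-router step first increments the rotor at the chip's location
(cyclically), then moves the chip in the new direction.  Chips are stopped
upon reaching a leaf (`o` included): leaf positions are absorbing.  Note that
these dynamics coincide with those of the wired tree `T̄ₙ` (all leaves
collapsed to a single sink) and of the branch `Yₙ` (all leaves except `o`
collapsed to a single boundary vertex `b`): stopping at `b` means stopping at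
a tree vertex of depth `n - 1`.
-/

/-- Rotor configurations (values at non-internal lists are irrelevant). -/
abbrev BConf (d : ℕ) := List (Fin (d - 1)) → ZMod d

/-- One rotor-router step on `T̂ₙ`; positions at the leaves are absorbing. -/
def bstep (d n : ℕ) (p : BConf d × Option (List (Fin (d - 1)))) :
    BConf d × Option (List (Fin (d - 1))) :=
  match p with
  | (C, none) => (C, none)
  | (C, some w) =>
    if n ≤ w.length + 1 then (C, some w)
    else
      let r := C w + 1
      let C' := Function.update C w r
      if h : r.val < d - 1 then (C', some (w ++ [⟨r.val, h⟩]))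
      else (C', if w = [] then none else some w.dropLast)

/-- Whether a position is a stopping position (the leaf `o` or a leaf of the
tree, i.e. a vertex of depth `n - 1`). -/
def bstoppedB (d n : ℕ) (p : Option (List (Fin (d - 1)))) : Bool :=
  match p with
  | none => true
  | some w => decide (n ≤ w.length + 1)

/-- Start one chip at the root `[]` and run rotor-router steps until the chip
reaches a leaf; return the resulting rotor configuration together with the
position at which the chip stopped. -/
noncomputable def runChip (d n : ℕ) (C : BConf d) :
    BConf d × Option (List (Fin (d - 1))) :=
  haveI := Classical.dec (∃ k, bstoppedB d n ((bstep d n)^[k] (C, some [])).2 = true)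
  if h : ∃ k, bstoppedB d n ((bstep d n)^[k] (C, some [])).2 = true then
    (bstep d n)^[Nat.find h] (C, some [])
  else (C, some [])

/-- The rotor configuration after `j` chips, started in succession at the
root, have walked until reaching a leaf (rotors persist between chips). -/
noncomputable def confAfter (d n : ℕ) (C : BConf d) : ℕ → BConf d
  | 0 => C
  | j + 1 => (runChip d n (confAfter d n C j)).1

/-- The position at which the `(j+1)`-st chip stops (`j = 0, 1, 2, …`):
`none` means it stopped at `o`, `some w` that it stopped at the leaf `w`. -/
noncomputable def result (d n : ℕ) (C : BConf d) (j : ℕ) :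
    Option (List (Fin (d - 1))) :=
  (runChip d n (confAfter d n C j)).2

namespace Stmt12Aux

variable {d n : ℕ}

lemma cast_succ (a : ℕ) : ((a : ℕ) : ZMod d) + 1 = ((a + 1 : ℕ) : ZMod d) := by
  push_cast; ring

lemma cast_d_add (a : ℕ) : ((d + a : ℕ) : ZMod d) = ((a : ℕ) : ZMod d) := by
  push_cast [ZMod.natCast_self]; ring

lemma val_cast (hd : 3 ≤ d) {a : ℕ} (ha : a < d) : ((a : ZMod d)).val = a := by
  haveI : NeZero d := ⟨by omega⟩
  exact ZMod.val_natCast_of_lt ha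

lemma snoc_prefix_inj {α : Type*} {w u : List α} {c c' : α}
    (h : (w ++ [c]) <+: u) (h' : (w ++ [c']) <+: u) : c = c' := by
  have h2 := (List.prefix_of_prefix_length_le h h' (by simp)).eq_of_length (by simp)
  simpa using h2

lemma prefix_snoc_of_ne {α : Type*} {w u : List α} (h : w <+: u) (hne : u ≠ w) :
    ∃ c : α, (w ++ [c]) <+: u := by
  obtain ⟨s, rfl⟩ := h
  cases s with
  | nil => simp at hne
  | cons c s => exact ⟨c, s, by simp⟩

lemma bstep_to_child (hd : 3 ≤ d) {C : BConf d} {w : List (Fin (d-1))}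
    (hlen : w.length + 2 ≤ n) {a : ℕ} (ha : a < d - 1)
    (hC : C w + 1 = ((a : ℕ) : ZMod d)) :
    bstep d n (C, some w)
      = (Function.update C w ((a : ℕ) : ZMod d), some (w ++ [⟨a, ha⟩])) := by
  have hval : (C w + 1).val = a := by rw [hC]; exact val_cast hd (by omega)
  simp only [bstep]
  rw [if_neg (by omega), dif_pos (by rw [hval]; exact ha)]
  simp [hC, hval, Nat.mod_eq_of_lt (show a < d by omega)]

lemma bstep_to_parent (hd : 3 ≤ d) {C : BConf d} {w : List (Fin (d-1))}
    (hlen : w.length + 2 ≤ n)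
    (hC : C w + 1 = ((d - 1 : ℕ) : ZMod d)) :
    bstep d n (C, some w)
      = (Function.update C w ((d - 1 : ℕ) : ZMod d),
         if w = [] then none else some w.dropLast) := by
  have hval : (C w + 1).val = d - 1 := by rw [hC]; exact val_cast hd (by omega)
  simp only [bstep]
  rw [if_neg (by omega), dif_neg (by omega)]
  simp [hC]

lemma excursion (hd : 3 ≤ d) :
    ∀ (k : ℕ) (w : List (Fin (d - 1))) (C : BConf d),
      w.length + k + 2 ≤ n →
      (∀ u, w <+: u → u.length < w.length + k → C u = ((d - 1 : ℕ) : ZMod d)) →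
      (∀ u, w <+: u → u.length = w.length + k → C u = ((d - 2 : ℕ) : ZMod d)) →
      ∃ (T : ℕ) (C' : BConf d), 0 < T ∧
        (∀ t < T, ∃ u, ((bstep d n)^[t] (C, some w)).2 = some u ∧
            u.length ≤ w.length + k) ∧
        (bstep d n)^[T] (C, some w)
          = (C', if w = [] then none else some w.dropLast) ∧
        (∀ u, (¬ w <+: u ∨ w.length + k < u.length) → C' u = C u) ∧
        (∀ u, w <+: u → u.length ≤ w.length + k → C' u = ((d - 1 : ℕ) : ZMod d)) := by
  intro k
  induction k with
  | zero =>
    intro w C hlen hC1 hC2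
    have hCw : C w + 1 = ((d - 1 : ℕ) : ZMod d) := by
      rw [hC2 w List.prefix_rfl (by omega), cast_succ]
      congr 1; omega
    refine ⟨1, Function.update C w ((d - 1 : ℕ) : ZMod d), one_pos, ?_, ?_, ?_, ?_⟩
    · intro t ht
      interval_cases t
      exact ⟨w, rfl, by omega⟩
    · rw [Function.iterate_one]
      exact bstep_to_parent hd (by omega) hCw
    · intro u hu
      have hne : u ≠ w := by
        rcases hu with hu | hu
        · exact fun h => hu (h ▸ List.prefix_rfl)
        · intro h; rw [h] at hu; omega
      exact Function.update_of_ne hne _ _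
    · intro u hu hul
      have he : w = u := hu.eq_of_length (le_antisymm hu.length_le (by omega))
      rw [← he, Function.update_self]
  | succ k ih =>
    intro w C hlen hC1 hC2
    have hwJ : w.length < w.length + (k + 1) := by omega
    have claim : ∀ i, i ≤ d - 1 → ∃ (T : ℕ) (C1 : BConf d),
        (∀ t < T, ∃ u, ((bstep d n)^[t] (C, some w)).2 = some u ∧
            u.length ≤ w.length + (k + 1)) ∧
        (bstep d n)^[T] (C, some w) = (C1, some w) ∧
        C1 w = ((d - 1 + i : ℕ) : ZMod d) ∧
        (∀ u, u ≠ w → (∀ c : Fin (d - 1), c.val < i → ¬ (w ++ [c]) <+: u) →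
            C1 u = C u) ∧
        (∀ u, w.length + (k + 1) < u.length → C1 u = C u) ∧
        (∀ c : Fin (d - 1), c.val < i → ∀ u, (w ++ [c]) <+: u →
            u.length ≤ w.length + (k + 1) → C1 u = ((d - 1 : ℕ) : ZMod d)) := by
      intro i
      induction i with
      | zero =>
        refine fun _ => ⟨0, C, fun t ht => absurd ht (by omega), by simp, ?_,
          fun u _ _ => rfl, fun u _ => rfl, fun c hc => absurd hc (by omega)⟩
        simpa using hC1 w List.prefix_rfl hwJ
      | succ i ihi =>
        intro hii
        obtain ⟨T, C1, hns, hit, hrot, ha1, ha2, hc⟩ := ihi (by omega)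
        have hilt : i < d - 1 := by omega
        have hCrot : C1 w + 1 = ((i : ℕ) : ZMod d) := by
          rw [hrot, cast_succ, show d - 1 + i + 1 = d + i by omega, cast_d_add]
        have hchild := bstep_to_child (n := n) hd (by omega) hilt hCrot
        set ci : Fin (d - 1) := ⟨i, hilt⟩ with hcidef
        set w' : List (Fin (d - 1)) := w ++ [ci] with hw'def
        set C1' : BConf d := Function.update C1 w ((i : ℕ) : ZMod d) with hC1'def
        have hw'len : w'.length = w.length + 1 := by simp [hw'def]
        have hiterstep : (bstep d n)^[T + 1] (C, some w) = (C1', some w') := by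
          rw [Function.iterate_succ_apply', hit, hchild]
        have hC1'sub : ∀ u, w' <+: u → C1' u = C u := by
          intro u hu
          have hul : w.length + 1 ≤ u.length := by
            have := hu.length_le; omega
          have hne : u ≠ w := by intro h; rw [h] at hul; omega
          rw [hC1'def, Function.update_of_ne hne]
          exact ha1 u hne (fun c hcv hpc =>
            absurd (congrArg Fin.val (snoc_prefix_inj hpc hu)) (by simp [hcidef]; omega))
        have hh1 : ∀ u, w' <+: u → u.length < w'.length + k →
            C1' u = ((d - 1 : ℕ) : ZMod d) := by
          intro u hu hul
          rw [hC1'sub u hu]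
          exact hC1 u ((List.prefix_append w [ci]).trans hu) (by omega)
        have hh2 : ∀ u, w' <+: u → u.length = w'.length + k →
            C1' u = ((d - 2 : ℕ) : ZMod d) := by
          intro u hu hul
          rw [hC1'sub u hu]
          exact hC2 u ((List.prefix_append w [ci]).trans hu) (by omega)
        obtain ⟨T', C2, hT'pos, hns', hit', hout', hin'⟩ :=
          ih w' C1' (by omega) hh1 hh2
        have hpos' : (if w' = [] then none else some w'.dropLast) = some w := by
          rw [if_neg (by simp [hw'def]), hw'def, List.dropLast_concat]
        have hiter2 : (bstep d n)^[T' + (T + 1)] (C, some w) = (C2, some w) := by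
          rw [Function.iterate_add_apply, hiterstep, hit', hpos']
        refine ⟨T' + (T + 1), C2, ?_, hiter2, ?_, ?_, ?_, ?_⟩
        · -- nonstop
          intro t ht
          rcases lt_trichotomy t T with h1 | h1 | h1
          · exact hns t h1
          · subst h1; exact ⟨w, by rw [hit], by omega⟩
          · have hts : t = (t - (T + 1)) + (T + 1) := by omega
            rw [hts, Function.iterate_add_apply, hiterstep]
            obtain ⟨u, hu1, hu2⟩ := hns' (t - (T + 1)) (by omega)
            exact ⟨u, hu1, by omega⟩
        · -- rotor at w
          have h1 : ¬ w' <+: w := by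
            intro h; have := h.length_le; omega
          rw [hout' w (Or.inl h1), hC1'def, Function.update_self,
            show ((d - 1 + (i + 1) : ℕ) : ZMod d) = ((d + i : ℕ) : ZMod d) by congr 1; omega,
            cast_d_add]
        · -- a1
          intro u hne hcs
          have hnc : ¬ w' <+: u := hcs ci (by simp [hcidef])
          rw [hout' u (Or.inl hnc), hC1'def, Function.update_of_ne hne]
          exact ha1 u hne (fun c hcv => hcs c (by omega))
        · -- a2
          intro u hJu
          have hne : u ≠ w := by intro h; rw [h] at hJu; omega
          rw [hout' u (Or.inr (by omega)), hC1'def, Function.update_of_ne hne]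
          exact ha2 u hJu
        · -- children done
          intro c hcv u hpu hlu
          by_cases hci : c.val = i
          · have : c = ci := Fin.ext (by simp [hcidef, hci])
            rw [this] at hpu
            exact hin' u hpu (by omega)
          · have hcv' : c.val < i := by omega
            have hnc : ¬ w' <+: u := fun h =>
              hci (congrArg Fin.val (snoc_prefix_inj hpu h))
            have hne : u ≠ w := by
              intro h
              have := hpu.length_le
              rw [h] at this; simp at this
            rw [hout' u (Or.inl hnc), hC1'def, Function.update_of_ne hne]
            exact hc c hcv' u hpu hlu
    -- use claim at i = d - 1, then one final step
    obtain ⟨T, C1, hns, hit, hrot, ha1, ha2, hc⟩ := claim (d - 1) le_rfl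
    have hCw : C1 w + 1 = ((d - 1 : ℕ) : ZMod d) := by
      rw [hrot, cast_succ, show d - 1 + (d - 1) + 1 = d + (d - 1) by omega, cast_d_add]
    have hfin := bstep_to_parent (n := n) hd (by omega) hCw
    refine ⟨T + 1, Function.update C1 w ((d - 1 : ℕ) : ZMod d), by omega, ?_, ?_, ?_, ?_⟩
    · intro t ht
      rcases lt_or_eq_of_le (Nat.lt_succ_iff.mp ht) with h1 | h1
      · exact hns t h1
      · subst h1; exact ⟨w, by rw [hit], by omega⟩
    · rw [Function.iterate_succ_apply', hit, hfin]
    · intro u hu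
      have hne : u ≠ w := by
        rcases hu with hu | hu
        · exact fun h => hu (h ▸ List.prefix_rfl)
        · intro h; rw [h] at hu; omega
      rw [Function.update_of_ne hne]
      rcases hu with hu | hu
      · exact ha1 u hne (fun c _ hp => hu ((List.prefix_append w [c]).trans hp))
      · exact ha2 u hu
    · intro u hpu hlu
      by_cases hne : u = w
      · rw [hne, Function.update_self]
      · rw [Function.update_of_ne hne]
        obtain ⟨c, hcp⟩ := prefix_snoc_of_ne hpu hne
        exact hc c c.isLt u hcp hlu

/-- The rotor configuration after `j` chips: all rotors at depth `< j` point
to the parent, the others still in the initial direction. -/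
def Cstage (d j : ℕ) : BConf d :=
  fun u => if u.length < j then ((d - 1 : ℕ) : ZMod d) else ((d - 2 : ℕ) : ZMod d)

lemma runChip_eq (hd : 3 ≤ d) {j : ℕ} (hj : j + 2 ≤ n) :
    runChip d n (Cstage d j) = (Cstage d (j + 1), none) := by
  obtain ⟨T, C', hT, hns, hiter, hout, hin⟩ :=
    excursion (n := n) hd j [] (Cstage d j) (by simpa)
      (fun u _ hu => if_pos (by simpa using hu))
      (fun u _ hu => if_neg (by omega))
  simp only [List.length_nil, Nat.zero_add, reduceIte] at hns hiter hout hin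
  have hex : ∃ k, bstoppedB d n ((bstep d n)^[k] (Cstage d j, some [])).2 = true := by
    exact ⟨T, by rw [hiter]; rfl⟩
  have hnot : ∀ t < T, ¬ bstoppedB d n ((bstep d n)^[t] (Cstage d j, some [])).2 = true := by
    intro t ht
    obtain ⟨u, hu1, hu2⟩ := hns t ht
    rw [hu1]
    simp only [bstoppedB, decide_eq_true_eq]
    omega
  rw [runChip, dif_pos hex]
  have hfind : Nat.find hex = T := by
    rw [Nat.find_eq_iff]
    exact ⟨by rw [hiter]; rfl, hnot⟩
  rw [hfind, hiter]
  congr 1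
  funext u
  by_cases hu : u.length ≤ j
  · rw [hin u u.nil_prefix hu, Cstage, if_pos (by omega)]
  · rw [hout u (Or.inr (by omega)), Cstage, Cstage, if_neg (by omega), if_neg (by omega)]

lemma confAfter_eq (hd : 3 ≤ d) : ∀ j, j + 1 ≤ n →
    confAfter d n (Cstage d 0) j = Cstage d j := by
  intro j
  induction j with
  | zero => intro _; rfl
  | succ j ihj =>
    intro hjn
    rw [confAfter, ihj (by omega), runChip_eq hd (by omega)]

end Stmt12Aux

/-- On the branch `Yₙ` of the `d`-regular tree, if all rotors initially point
in direction `d − 1` (encoded by `d - 2 : ZMod d`), then each of the first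
`n − 1` chips started at the root reaches `o` before reaching the boundary
`b`; after these `n − 1` chips have stopped at `o`, all rotors point in
direction `d` (to the parent, encoded by `d - 1 : ZMod d`). -/
theorem stmt12 (d n : ℕ) (hd : 3 ≤ d) :
    (∀ j < n - 1, result d n (fun _ => ((d - 2 : ℕ) : ZMod d)) j = none) ∧
    ∀ w : List (Fin (d - 1)), w.length + 1 < n →
      confAfter d n (fun _ => ((d - 2 : ℕ) : ZMod d)) (n - 1) w
        = ((d - 1 : ℕ) : ZMod d) := by
  have hC0 : (fun _ => ((d - 2 : ℕ) : ZMod d)) = Stmt12Aux.Cstage d 0 := by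
    funext u
    rw [Stmt12Aux.Cstage, if_neg (by omega)]
  constructor
  · intro j hj
    have hn : j + 2 ≤ n := by omega
    rw [result, hC0, Stmt12Aux.confAfter_eq hd j (by omega),
      Stmt12Aux.runChip_eq hd hn]
  · intro w hw
    have hn : 2 ≤ n := by omega
    rw [hC0, Stmt12Aux.confAfter_eq hd (n - 1) (by omega), Stmt12Aux.Cstage,
      if_pos (by omega)]
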